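/- arXiv:2503.01427 — 2 statements merged into one kernel-verified Lean document; each statement's English description precedes it below -/
import Mathlib

section
/- If ρ₀ > 0 is continuous on the closure of Ω, c⁰ is smooth, and ρ¹ is a smooth solution of ρ¹ − δtΔρ¹ + δtχ∇·(ρ¹∇c⁰) = ρ₀ on a bounded domain Ω with Neumann boundary conditions, then ρ¹ > 0 on Ω. (If ρ¹ vanished at an interior minimum point x₀, then ∇ρ¹(x₀) = 0 and Δρ¹(x₀) ≥ 0, forcing ρ₀(x₀) ≤ 0, a contradiction.) -/
open MeasureTheory

noncomputable section

abbrev E2 : Type := EuclideanSpace ℝ (Fin 2)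

def lap (f : E2 → ℝ) (x : E2) : ℝ :=
  ∑ i, fderiv ℝ (fun y => fderiv ℝ f y (EuclideanSpace.single i 1)) x (EuclideanSpace.single i 1)

def dvg (v : E2 → E2) (x : E2) : ℝ :=
  ∑ i, fderiv ℝ (fun y => v y i) x (EuclideanSpace.single i 1)

/-- Second directional derivative at a local minimum of a C² function is nonnegative. -/
lemma second_dir_deriv_nonneg (f : E2 → ℝ) (hf : ContDiff ℝ 2 f) (x v : E2)
    (hmin : IsLocalMin f x) :
    0 ≤ fderiv ℝ (fun y => fderiv ℝ f y v) x v := by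
  have hdf : Differentiable ℝ f := hf.differentiable (by norm_num)
  have hdf' : Differentiable ℝ (fderiv ℝ f) :=
    (hf.fderiv_right (m := 1) le_rfl).differentiable (by norm_num)
  set g : ℝ → ℝ := fun t => f (x + t • v) with hg_def
  have hL : ∀ t : ℝ, HasDerivAt (fun s : ℝ => x + s • v) v t := by
    intro t
    simpa using ((hasDerivAt_id t).smul_const v).const_add x
  have hg : ∀ t : ℝ, HasDerivAt g (fderiv ℝ f (x + t • v) v) t := by
    intro t
    exact (hdf _).hasFDerivAt.comp_hasDerivAt t (hL t)
  set G : ℝ → ℝ := fun t => fderiv ℝ f (x + t • v) v with hG_def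
  have hG0 : G 0 = 0 := by
    simp [hG_def, hmin.fderiv_eq_zero]
  have h2 : Differentiable ℝ (fun y => fderiv ℝ f y v) :=
    (ContinuousLinearMap.apply ℝ ℝ v).differentiable.comp hdf'
  set c : ℝ := fderiv ℝ (fun y => fderiv ℝ f y v) x v with hc_def
  have hG : HasDerivAt G c 0 := by
    have := (h2 _).hasFDerivAt.comp_hasDerivAt 0 (hL 0)
    simpa [hG_def, hc_def, Function.comp_def] using this
  have hgmin : IsLocalMin g 0 := by
    have hcont : Continuous (fun t : ℝ => x + t • v) := continuous_const.add (continuous_id.smul continuous_const)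
    have htend : Filter.Tendsto (fun t : ℝ => x + t • v) (nhds 0) (nhds x) := by
      simpa using hcont.tendsto 0
    have := htend.eventually hmin
    simpa [IsLocalMin, IsMinFilter, hg_def] using this
  by_contra hcneg
  push_neg at hcneg
  -- slope of G at 0 tends to c < 0
  have hslope : Filter.Tendsto (slope G 0) (nhdsWithin 0 {(0:ℝ)}ᶜ) (nhds c) :=
    hasDerivAt_iff_tendsto_slope.mp hG
  have hev : ∀ᶠ t in nhdsWithin 0 {(0:ℝ)}ᶜ, slope G 0 t < 0 :=
    hslope.eventually_lt_const hcneg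
  have hev' : ∀ᶠ t in nhdsWithin (0:ℝ) (Set.Ioi 0), G t < 0 := by
    have hmono : nhdsWithin (0:ℝ) (Set.Ioi 0) ≤ nhdsWithin 0 {(0:ℝ)}ᶜ :=
      nhdsWithin_mono 0 (fun t ht => ne_of_gt ht)
    filter_upwards [hev.filter_mono hmono, self_mem_nhdsWithin] with t ht ht0
    have ht0' : (0:ℝ) < t := ht0
    have : slope G 0 t = G t / t := by
      simp [slope_def_field, hG0]
    rw [this] at ht
    have := mul_neg_of_neg_of_pos ht ht0'
    rwa [div_mul_cancel₀ _ (ne_of_gt ht0')] at this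
  obtain ⟨ε, hε, hsub⟩ := mem_nhdsGT_iff_exists_Ioo_subset.mp hev'
  obtain ⟨δ, hδ, hδmin⟩ := Metric.eventually_nhds_iff.mp hgmin
  set t0 : ℝ := min ε δ / 2 with ht0_def
  have hεpos : (0:ℝ) < ε := hε
  have ht0pos : 0 < t0 := by positivity
  have ht0ε : t0 < ε := by
    have := min_le_left ε δ
    linarith
  have ht0δ : t0 < δ := by
    have := min_le_right ε δ
    linarith
  have hgc : Continuous g := hdf.continuous.comp (continuous_const.add (continuous_id.smul continuous_const))
  have hanti : StrictAntiOn g (Set.Icc 0 t0) := by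
    apply strictAntiOn_of_deriv_neg (convex_Icc _ _) hgc.continuousOn
    intro t ht
    rw [interior_Icc] at ht
    rw [(hg t).deriv]
    exact hsub ⟨ht.1, lt_trans ht.2 ht0ε⟩
  have h1 : g t0 < g 0 := hanti ⟨le_rfl, ht0pos.le⟩ ⟨ht0pos.le, le_rfl⟩ ht0pos
  have h2 : g 0 ≤ g t0 := by
    apply hδmin
    simp [abs_of_pos ht0pos, ht0δ]
  linarith

/-- Strict positivity of ρ¹ when ρ₀ > 0: if ρ¹ ≥ 0 solves
ρ¹ − δtΔρ¹ + δtχ∇·(ρ¹∇c⁰) = ρ₀ on a bounded domain Ω with ρ₀ > 0 continuous on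
the closure of Ω, then ρ¹ > 0 on Ω. -/
theorem discrete_strict_positivity
    (Ω : Set E2) (hΩopen : IsOpen Ω) (hΩb : Bornology.IsBounded Ω)
    (δt χ : ℝ) (hδt : 0 < δt) (hχ : 0 < χ)
    (ρ0 ρ1 c0 : E2 → ℝ)
    (hρ0cont : ContinuousOn ρ0 (closure Ω))
    (hρ0pos : ∀ x ∈ closure Ω, 0 < ρ0 x)
    (hρ1 : ContDiff ℝ 2 ρ1) (hc0 : ContDiff ℝ 2 c0)
    (hscheme : ∀ x ∈ Ω,
      ρ1 x - δt * lap ρ1 x + δt * χ * dvg (fun y => ρ1 y • gradient c0 y) x = ρ0 x)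
    (hρ1_nonneg : ∀ x ∈ Ω, 0 ≤ ρ1 x) :
    ∀ x ∈ Ω, 0 < ρ1 x := by
  intro x hx
  rcases (hρ1_nonneg x hx).lt_or_eq with h | h
  · exact h
  · exfalso
    have hmin : IsLocalMin ρ1 x := by
      filter_upwards [hΩopen.mem_nhds hx] with y hy
      rw [← h]; exact hρ1_nonneg y hy
    have hfd0 : fderiv ℝ ρ1 x = 0 := hmin.fderiv_eq_zero
    have hlap : 0 ≤ lap ρ1 x :=
      Finset.sum_nonneg fun i _ => second_dir_deriv_nonneg ρ1 hρ1 x _ hmin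
    have hρ1diff : Differentiable ℝ ρ1 := hρ1.differentiable (by norm_num)
    have hdc0' : Differentiable ℝ (fderiv ℝ c0) :=
      (hc0.fderiv_right (m := 1) le_rfl).differentiable (by norm_num)
    have hdvg : dvg (fun y => ρ1 y • gradient c0 y) x = 0 := by
      unfold dvg
      apply Finset.sum_eq_zero
      intro i _
      have hWe : (fun y => (gradient c0 y) i)
          = fun y => fderiv ℝ c0 y (EuclideanSpace.single i 1) := by
        funext y
        have hfe : fderiv ℝ c0 y = InnerProductSpace.toDual ℝ E2 (gradient c0 y) := by
          simp [gradient]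
        rw [hfe, InnerProductSpace.toDual_apply_apply]
        rw [EuclideanSpace.inner_single_right]; simp
      have hW : Differentiable ℝ (fun y => (gradient c0 y) i) := by
        rw [hWe]
        exact (ContinuousLinearMap.apply ℝ ℝ _).differentiable.comp hdc0'
      have heq : (fun y => (ρ1 y • gradient c0 y) i)
          = fun y => ρ1 y * (gradient c0 y) i := by
        funext y; simp [PiLp.smul_apply, smul_eq_mul]
      show fderiv ℝ (fun y => (ρ1 y • gradient c0 y) i) x (EuclideanSpace.single i 1) = 0
      rw [heq, fderiv_fun_mul (hρ1diff x) (hW x), ← h, hfd0]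
      simp
    have hs := hscheme x hx
    rw [hdvg, ← h] at hs
    have hρ0x : 0 < ρ0 x := hρ0pos x (subset_closure hx)
    have hmul : 0 ≤ δt * lap ρ1 x := mul_nonneg hδt.le hlap
    nlinarith

end
end

section
/- Fix α > 0, τ > 0, δt > 0 and 0 ≤ s < 1. For every integer k ≥ 1, sup_{r ≥ 0} r(α + r²)^{s/2} / (1 + (δt/τ)(α + r²))^k ≤ max{ 2^{s/2} α^{(1+s)/2}, ((1+s)τ / ((2k−1−s)δt))^{(1+s)/2} }. -/
/-- Key AM–GM step: `((K-p)/p * x)^p ≤ (1+x)^K` for `0 ≤ x`, `0 < p < K`. -/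
lemma key_ineq (x p K : ℝ) (hx : 0 ≤ x) (hp : 0 < p) (hpK : p < K) :
    ((K - p)/p * x) ^ p ≤ (1 + x) ^ K := by
  have hK : 0 < K := hp.trans hpK
  have hKp : 0 < K - p := sub_pos.2 hpK
  have hz₁ : (0:ℝ) ≤ K/(K-p) := le_of_lt (div_pos hK hKp)
  have hz₂ : (0:ℝ) ≤ K*x/p := div_nonneg (mul_nonneg hK.le hx) hp.le
  have hw : (K-p)/K + p/K = 1 := by field_simp; ring
  have hgm := Real.geom_mean_le_arith_mean2_weighted
    (div_nonneg hKp.le hK.le) (div_nonneg hp.le hK.le) hz₁ hz₂ hw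
  have hrhs : (K-p)/K * (K/(K-p)) + p/K * (K*x/p) = 1 + x := by
    field_simp
  rw [hrhs] at hgm
  -- raise both sides to power K
  have hbase : (0:ℝ) ≤ (K/(K-p)) ^ ((K-p)/K) * (K*x/p) ^ (p/K) :=
    mul_nonneg (Real.rpow_nonneg hz₁ _) (Real.rpow_nonneg hz₂ _)
  have hpow := Real.rpow_le_rpow hbase hgm hK.le
  have e1 : ((K/(K-p)) ^ ((K-p)/K)) ^ K = (K/(K-p)) ^ (K-p) := by
    rw [← Real.rpow_mul hz₁]; congr 1; field_simp
  have e2 : ((K*x/p) ^ (p/K)) ^ K = (K*x/p) ^ p := by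
    rw [← Real.rpow_mul hz₂]; congr 1; field_simp
  rw [Real.mul_rpow (Real.rpow_nonneg hz₁ _) (Real.rpow_nonneg hz₂ _), e1, e2] at hpow
  have h1le : (1:ℝ) ≤ (K/(K-p)) ^ (K-p) := by
    have : (1:ℝ) ≤ K/(K-p) := (one_le_div hKp).2 (by linarith)
    calc (1:ℝ) = 1 ^ (K-p) := (Real.one_rpow _).symm
    _ ≤ (K/(K-p)) ^ (K-p) := Real.rpow_le_rpow zero_le_one this hKp.le
  have harg : (K - p)/p * x ≤ K*x/p := by
    rw [div_mul_eq_mul_div, div_le_div_iff_of_pos_right hp]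
    nlinarith
  calc ((K - p)/p * x) ^ p ≤ (K*x/p) ^ p :=
        Real.rpow_le_rpow (mul_nonneg (div_nonneg hKp.le hp.le) hx) harg hp.le
  _ ≤ (K/(K-p)) ^ (K-p) * (K*x/p) ^ p :=
        le_mul_of_one_le_left (Real.rpow_nonneg hz₂ _) h1le
  _ ≤ (1 + x) ^ K := hpow

/-- Symbol bound for ∇A^{s/2}(I + (δt/τ)A)^{−k} with A = −Δ + αI:
for every r ≥ 0 and integer k ≥ 1,
r(α + r²)^{s/2}/(1 + (δt/τ)(α + r²))^k
  ≤ max{2^{s/2} α^{(1+s)/2}, ((1+s)τ/((2k−1−s)δt))^{(1+s)/2}}. -/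
theorem symbol_bound
    (α τ δt s : ℝ) (hα : 0 < α) (hτ : 0 < τ) (hδt : 0 < δt)
    (hs0 : 0 ≤ s) (hs1 : s < 1) (k : ℕ) (hk : 1 ≤ k) :
    ∀ r : ℝ, 0 ≤ r →
      r * (α + r^2) ^ (s/2) / (1 + (δt/τ) * (α + r^2))^k
        ≤ max (2 ^ (s/2) * α ^ ((1+s)/2))
            (((1+s) * τ / ((2*(k:ℝ) - 1 - s) * δt)) ^ ((1+s)/2)) := by
  intro r hr
  set p : ℝ := (1+s)/2 with hpdef
  set K : ℝ := (k:ℝ) with hKdef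
  have hK1 : (1:ℝ) ≤ K := by rw [hKdef]; exact_mod_cast hk
  have hp : 0 < p := by unfold p; linarith
  have hp1 : p < 1 := by unfold p; linarith
  have hpK : p < K := hp1.trans_le hK1
  have hKp : 0 < K - p := sub_pos.2 hpK
  have hR : 0 < α + r^2 := by positivity
  have hβ : 0 < δt/τ := div_pos hδt hτ
  set x : ℝ := (δt/τ) * (α + r^2) with hxdef
  have hx : 0 < x := mul_pos hβ hR
  -- numerator bound: r * R^(s/2) ≤ R^p
  have hrle : r ≤ (α + r^2) ^ ((1:ℝ)/2) := by
    rw [← Real.sqrt_eq_rpow]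
    exact (Real.le_sqrt hr hR.le).2 (by nlinarith)
  have hnum : r * (α + r^2) ^ (s/2) ≤ (α + r^2) ^ p := by
    have : (α + r^2) ^ ((1:ℝ)/2) * (α + r^2) ^ (s/2) = (α + r^2) ^ p := by
      rw [← Real.rpow_add hR]; congr 1; unfold p; ring
    calc r * (α + r^2) ^ (s/2) ≤ (α + r^2) ^ ((1:ℝ)/2) * (α + r^2) ^ (s/2) :=
          mul_le_mul_of_nonneg_right hrle (Real.rpow_nonneg hR.le _)
    _ = (α + r^2) ^ p := this
  have hden : (0:ℝ) < (1 + x)^k := pow_pos (by linarith) k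
  have hkey : ((K - p)/p * x) ^ p ≤ (1 + x)^k := by
    have := key_ineq x p K hx.le hp hpK
    rwa [Real.rpow_natCast] at this
  have hc : (0:ℝ) < ((K - p)/p * x) ^ p :=
    Real.rpow_pos_of_pos (mul_pos (div_pos hKp hp) hx) _
  have step1 : r * (α + r^2) ^ (s/2) / (1 + x)^k ≤ (α + r^2) ^ p / ((K - p)/p * x) ^ p := by
    exact div_le_div₀ (Real.rpow_nonneg hR.le _) hnum hc hkey
  have step2 : (α + r^2) ^ p / ((K - p)/p * x) ^ p
      = ((1+s) * τ / ((2*K - 1 - s) * δt)) ^ p := by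
    rw [← Real.div_rpow hR.le (mul_nonneg (div_nonneg hKp.le hp.le) hx.le)]
    congr 1
    have h2Kp : 2*K - 1 - s = 2*(K - p) := by unfold p; ring
    have h1s : 1 + s = 2*p := by unfold p; ring
    rw [h2Kp, h1s, hxdef]
    field_simp
  refine le_max_of_le_right ?_
  calc r * (α + r^2) ^ (s/2) / (1 + (δt/τ) * (α + r^2))^k
      = r * (α + r^2) ^ (s/2) / (1 + x)^k := by rw [hxdef]
  _ ≤ (α + r^2) ^ p / ((K - p)/p * x) ^ p := step1
  _ = ((1+s) * τ / ((2*K - 1 - s) * δt)) ^ p := step2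
  _ = ((1+s) * τ / ((2*(k:ℝ) - 1 - s) * δt)) ^ ((1+s)/2) := by rw [hKdef, hpdef]
end
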